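/- Let V be a real Banach space whose density character is less than 𝔟, and suppose there exists a lower semicontinuous quasi metric on the dual unit ball B_{V*} equipped with the weak* topology which fragments it. Then V is Asplund generated: there exists a bounded set M ⊆ V whose closed linear span is V and such that the pseudometric d_M(x*,y*) = sup_{x∈M} |x*(x) − y*(x)| fragments (B_{V*}, weak*). -/

import Mathlib

open Set Topology Cardinal

/-- A map `f : X × X → ℝ` fragments the topological space `X` if for every nonempty
subset `L` of `X` and every `ε > 0` there is a nonempty relatively open subset of `L`
of `f`-diameter less than `ε`. -/
def Fragments {X : Type*} [TopologicalSpace X] (f : X → X → ℝ) : Prop :=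
  ∀ L : Set X, L.Nonempty → ∀ ε : ℝ, 0 < ε →
    ∃ V : Set X, IsOpen V ∧ (V ∩ L).Nonempty ∧
      ∀ x ∈ V ∩ L, ∀ y ∈ V ∩ L, f x y < ε

/-- `f` (defined on the ambient space `X`) fragments the subset `K`. -/
def FragmentsOn {X : Type*} [TopologicalSpace X] (f : X → X → ℝ) (K : Set X) : Prop :=
  ∀ L : Set X, L ⊆ K → L.Nonempty → ∀ ε : ℝ, 0 < ε →
    ∃ V : Set X, IsOpen V ∧ (V ∩ L).Nonempty ∧
      ∀ x ∈ V ∩ L, ∀ y ∈ V ∩ L, f x y < ε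

/-- A quasi metric: nonnegative, symmetric, and vanishing exactly on the diagonal. -/
def IsQuasiMetric {X : Type*} (f : X → X → ℝ) : Prop :=
  (∀ x y, 0 ≤ f x y) ∧ (∀ x y, f x y = f y x) ∧ (∀ x y, f x y = 0 ↔ x = y)

/-- A metric (as a two-variable real function): symmetric, vanishing exactly on the
diagonal, and satisfying the triangle inequality. -/
def IsMetricFun {X : Type*} (d : X → X → ℝ) : Prop :=
  (∀ x y, d x y = d y x) ∧ (∀ x y, d x y = 0 ↔ x = y) ∧
    (∀ x y z, d x z ≤ d x y + d y z)

/-- Lower semicontinuity of a two-variable map for the product topology. -/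
def LSC {X : Type*} [TopologicalSpace X] (f : X → X → ℝ) : Prop :=
  LowerSemicontinuous (fun p : X × X => f p.1 p.2)

/-- A subset of `ℕ → ℕ` is σ-bounded (for the pointwise order) if it is a countable
union of order-bounded sets. -/
def SigmaBounded (S : Set (ℕ → ℕ)) : Prop :=
  ∃ B : ℕ → Set (ℕ → ℕ), S ⊆ (⋃ n, B n) ∧ ∀ n, ∃ τ : ℕ → ℕ, ∀ σ ∈ B n, σ ≤ τ

/-- The cardinal `𝔟`: the least cardinality of a subset of `ℕ → ℕ` which is not
σ-bounded for the pointwise order. -/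
noncomputable def cardinalB : Cardinal :=
  sInf { c | ∃ S : Set (ℕ → ℕ), ¬ SigmaBounded S ∧ #S = c }

/-- The density character of a topological space: the least cardinality of a dense subset. -/
noncomputable def densChar (V : Type u) [TopologicalSpace V] : Cardinal.{u} :=
  sInf { c | ∃ s : Set V, Dense s ∧ #s = c }

/-- The closed unit ball of the dual of `V`, carrying the weak* topology. -/
def dualBall (V : Type u) [NormedAddCommGroup V] [NormedSpace ℝ V] : Set (WeakDual ℝ V) :=
  {φ : WeakDual ℝ V | ∀ x : V, |φ x| ≤ ‖x‖}

/-- The pseudometric `d_M` on the dual unit ball induced by a set `M ⊆ V`: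
`d_M(x*, y*) = sup_{x ∈ M} |x*(x) - y*(x)|`. -/
noncomputable def dM {V : Type u} [NormedAddCommGroup V] [NormedSpace ℝ V] (M : Set V)
    (φ ψ : dualBall V) : ℝ :=
  ⨆ x : M, |(φ : WeakDual ℝ V) x - (ψ : WeakDual ℝ V) x|

/-- `V` is Asplund generated: it is the closed linear span of a bounded set `M` such that
`d_M` fragments the weak* dual unit ball. -/
def AsplundGenerated (V : Type u) [NormedAddCommGroup V] [NormedSpace ℝ V] : Prop :=
  ∃ M : Set V, Bornology.IsBounded M ∧
    (Submodule.span ℝ M).topologicalClosure = ⊤ ∧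
    Fragments (dM M)

section Aux

open Filter

variable {V : Type u} [NormedAddCommGroup V] [NormedSpace ℝ V]

theorem dualBall_isCompact : IsCompact (dualBall V) := by
  have hp := WeakDual.isCompact_polar (𝕜 := ℝ) (Metric.closedBall_mem_nhds (0:V) one_pos)
  refine hp.of_isClosed_subset ?_ ?_
  · have : dualBall V = ⋂ x : V, {φ : WeakDual ℝ V | |φ x| ≤ ‖x‖} := by
      ext φ; simp [dualBall, Set.mem_iInter]
    rw [this]
    exact isClosed_iInter fun x =>
      isClosed_le (continuous_abs.comp (WeakDual.eval_continuous x)) continuous_const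
  · intro φ hφ
    rw [WeakDual.polar_def]
    intro x hx
    simp only [Metric.mem_closedBall, dist_zero_right] at hx
    calc ‖φ x‖ = |φ x| := rfl
    _ ≤ ‖x‖ := hφ x
    _ ≤ 1 := hx

theorem key_unif (hcomp : IsCompact (dualBall V))
    {f : dualBall V → dualBall V → ℝ} (hq : IsQuasiMetric f) (hlsc : LSC f)
    (x : V) (n : ℕ) :
    ∃ m : ℕ, ∀ φ ψ : dualBall V, f φ ψ < ((m : ℝ) + 1)⁻¹ →
      |(φ : WeakDual ℝ V) x - (ψ : WeakDual ℝ V) x| ≤ ((n : ℝ) + 1)⁻¹ := by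
  obtain ⟨hf0, hfsymm, hfeq⟩ := hq
  by_contra h
  push_neg at h
  choose φs ψs h1 h2 using h
  haveI : CompactSpace (dualBall V) := isCompact_iff_compactSpace.mp hcomp
  set u : ℕ → dualBall V × dualBall V := fun m => (φs m, ψs m) with hu
  obtain ⟨p, hp⟩ := exists_clusterPt_of_compactSpace (map u atTop)
  set C : Set (dualBall V × dualBall V) :=
    {q | ((n : ℝ) + 1)⁻¹ ≤ |(q.1 : WeakDual ℝ V) x - (q.2 : WeakDual ℝ V) x|} with hC
  have hCclosed : IsClosed C := by
    apply isClosed_le continuous_const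
    apply Continuous.abs
    exact ((WeakDual.eval_continuous x).comp
        (continuous_subtype_val.comp continuous_fst)).sub
      ((WeakDual.eval_continuous x).comp (continuous_subtype_val.comp continuous_snd))
  have hpC : p ∈ C := by
    have hmem : C ∈ map u atTop := by
      refine mem_map.mpr (Filter.Eventually.of_forall fun m => ?_)
      exact le_of_lt (h2 m)
    have : ClusterPt p (𝓟 C) := hp.mono (le_principal_iff.mpr hmem)
    rw [← mem_closure_iff_clusterPt] at this
    rwa [hCclosed.closure_eq] at this
  have hne : p.1 ≠ p.2 := by
    intro hEq
    rw [hC, Set.mem_setOf_eq, hEq, sub_self, abs_zero] at hpC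
    have : (0:ℝ) < ((n : ℝ) + 1)⁻¹ := by positivity
    linarith
  have hfpos : 0 < f p.1 p.2 := by
    rcases (hf0 p.1 p.2).lt_or_eq with h | h
    · exact h
    · exact absurd ((hfeq p.1 p.2).mp h.symm) hne
  set y : ℝ := f p.1 p.2 / 2 with hy
  have hylt : y < f p.1 p.2 := half_lt_self hfpos
  have hypos : 0 < y := half_pos hfpos
  have hA : {q : dualBall V × dualBall V | y < f q.1 q.2} ∈ 𝓝 p := hlsc p y hylt
  have hB : {q : dualBall V × dualBall V | f q.1 q.2 < y} ∈ map u atTop := by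
    rw [mem_map]
    have : ∀ᶠ m : ℕ in atTop, ((m:ℝ)+1)⁻¹ < y := by
      have ht : Tendsto (fun m : ℕ => ((m:ℝ)+1)⁻¹) atTop (𝓝 0) := by
        simpa [one_div] using tendsto_one_div_add_atTop_nhds_zero_nat (𝕜 := ℝ)
      exact ht.eventually_lt_const hypos
    filter_upwards [this] with m hm
    exact (h1 m).trans hm
  obtain ⟨q, hq1, hq2⟩ := hp.nonempty_of_mem (inter_mem_inf hA hB)
  exact absurd (hq1.trans hq2) (lt_irrefl y)

end Aux

/-- If `V` is a Banach space of density character less than `𝔟` whose weak* dual unit ball is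
quasi Radon-Nikodým compact, then `V` is Asplund generated. -/
theorem statement8 {V : Type u} [NormedAddCommGroup V] [NormedSpace ℝ V] [CompleteSpace V]
    (hdens : densChar V < Cardinal.lift.{u} cardinalB)
    (hqRN : ∃ f : dualBall V → dualBall V → ℝ, IsQuasiMetric f ∧ LSC f ∧ Fragments f) :
    AsplundGenerated V := by
  classical
  obtain ⟨f, hq, hlsc, hfrag⟩ := hqRN
  have hcomp : IsCompact (dualBall V) := dualBall_isCompact
  have key := fun (x : V) (n : ℕ) => key_unif hcomp hq hlsc x n
  set σ : V → ℕ → ℕ := fun x n => (key x n).choose with hσdef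
  have hσ : ∀ (x : V) (n : ℕ), ∀ φ ψ : dualBall V, f φ ψ < ((σ x n : ℝ) + 1)⁻¹ →
      |(φ : WeakDual ℝ V) x - (ψ : WeakDual ℝ V) x| ≤ ((n : ℝ) + 1)⁻¹ :=
    fun x n => (key x n).choose_spec
  -- a dense set of minimal cardinality
  have hne : {c | ∃ s : Set V, Dense s ∧ #s = c}.Nonempty :=
    ⟨#(univ : Set V), univ, dense_univ, rfl⟩
  have hmem := csInf_mem hne
  obtain ⟨s, hs_dense, hs_card⟩ := hmem
  have hs_card' : #(↥s) = densChar V := hs_card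
  -- the family of σ's is σ-bounded
  set S : Set (ℕ → ℕ) := Set.range (fun x : s => σ (x : V)) with hSdef
  have hSsb : SigmaBounded S := by
    by_contra hnb
    have h1 : cardinalB ≤ #S := csInf_le' ⟨S, hnb, rfl⟩
    have h2 : Cardinal.lift.{u} #S ≤ Cardinal.lift.{0} #(↥s) := Cardinal.mk_range_le_lift
    rw [Cardinal.lift_id'] at h2
    have h3 : Cardinal.lift.{u} #S < Cardinal.lift.{u} cardinalB := by
      calc Cardinal.lift.{u} #S ≤ #(↥s) := h2
      _ = densChar V := hs_card'
      _ < Cardinal.lift.{u} cardinalB := hdens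
    exact absurd (Cardinal.lift_lt.mp h3) (not_lt.mpr h1)
  obtain ⟨B, hSB, hBbd⟩ := hSsb
  choose τ hτ using hBbd
  have hkex : ∀ x : s, ∃ j, σ (x : V) ∈ B j := by
    intro x
    have hmm : σ (x : V) ∈ S := Set.mem_range_self x
    exact Set.mem_iUnion.mp (hSB hmm)
  choose k hk using hkex
  -- the scaled set M
  set c : s → ℝ := fun x => (((k x : ℝ) + 1) * (1 + ‖(x : V)‖))⁻¹ with hcdef
  have hcpos : ∀ x : s, 0 < c x := by
    intro x
    apply inv_pos.mpr
    positivity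
  have hcle : ∀ x : s, c x ≤ 1 := by
    intro x
    apply inv_le_one_of_one_le₀
    have h0 : (0:ℝ) ≤ (k x : ℝ) := Nat.cast_nonneg (k x)
    nlinarith [norm_nonneg (x : V)]
  set m' : s → V := fun x => c x • (x : V) with hmdef
  set M : Set V := Set.range m' with hMdef
  have hMbd : Bornology.IsBounded M := by
    apply (Metric.isBounded_closedBall (x := (0:V)) (r := 1)).subset
    rintro _ ⟨x, rfl⟩
    simp only [Metric.mem_closedBall, dist_zero_right, hmdef, norm_smul]
    rw [Real.norm_eq_abs, abs_of_pos (hcpos x), hcdef]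
    have hpos : (0:ℝ) < ((k x : ℝ) + 1) * (1 + ‖(x:V)‖) := by positivity
    rw [inv_mul_le_iff₀ hpos]
    have h0 : (0:ℝ) ≤ (k x : ℝ) := Nat.cast_nonneg (k x)
    nlinarith [norm_nonneg (x : V)]
  have hspan : (Submodule.span ℝ M).topologicalClosure = ⊤ := by
    have hsub : s ⊆ (Submodule.span ℝ M : Set V) := by
      intro x hx
      have hmm : m' ⟨x, hx⟩ ∈ Submodule.span ℝ M :=
        Submodule.subset_span (Set.mem_range_self _)
      have h2 := Submodule.smul_mem _ (c ⟨x, hx⟩)⁻¹ hmm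
      rwa [hmdef, smul_smul, inv_mul_cancel₀ (hcpos ⟨x, hx⟩).ne', one_smul] at h2
    rw [SetLike.ext'_iff, Submodule.topologicalClosure_coe, Submodule.top_coe,
      Set.eq_univ_iff_forall]
    intro v
    exact closure_mono hsub (hs_dense v)
  refine ⟨M, hMbd, hspan, ?_⟩
  intro L hL ε hε
  obtain ⟨n, hn⟩ := exists_nat_one_div_lt (half_pos hε)
  set mBig : ℕ := (Finset.range (n+1)).sup (fun j => τ j n) with hmBig
  have hδpos : (0:ℝ) < ((mBig:ℝ)+1)⁻¹ := by positivity
  obtain ⟨U, hUopen, hUne, hUdiam⟩ := hfrag L hL _ hδpos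
  refine ⟨U, hUopen, hUne, ?_⟩
  intro φ hφ ψ hψ
  have hf_small : f φ ψ < ((mBig:ℝ)+1)⁻¹ := hUdiam φ hφ ψ hψ
  haveI : Nonempty V := ⟨0⟩
  have hsne : s.Nonempty := hs_dense.nonempty
  haveI hMne : Nonempty ↥M :=
    ⟨⟨m' ⟨hsne.choose, hsne.choose_spec⟩, Set.mem_range_self _⟩⟩
  have hbound : ∀ v : ↥M,
      |(φ : WeakDual ℝ V) (v : V) - (ψ : WeakDual ℝ V) (v : V)| ≤ 2 * ((n:ℝ)+1)⁻¹ := by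
    rintro ⟨_, x, rfl⟩
    have hval : |(φ : WeakDual ℝ V) (m' x) - (ψ : WeakDual ℝ V) (m' x)|
        = c x * |(φ : WeakDual ℝ V) (x : V) - (ψ : WeakDual ℝ V) (x : V)| := by
      rw [hmdef]
      simp only [map_smul, smul_eq_mul]
      rw [← mul_sub, abs_mul, abs_of_pos (hcpos x)]
    rw [Subtype.coe_mk, hval]
    rcases le_or_gt (k x) n with hkn | hkn
    · have hσle : σ (x:V) n ≤ mBig := by
        have h1 : σ (x:V) ≤ τ (k x) := hτ (k x) _ (hk x)
        calc σ (x:V) n ≤ τ (k x) n := h1 n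
        _ ≤ mBig := Finset.le_sup (f := fun j => τ j n) (Finset.mem_range.mpr (Nat.lt_succ_of_le hkn))
      have hflt : f φ ψ < ((σ (x:V) n : ℝ)+1)⁻¹ := by
        refine hf_small.trans_le ?_
        have hc : ((σ (x:V) n : ℝ)+1) ≤ ((mBig:ℝ)+1) := by
          have := (Nat.cast_le (α := ℝ)).mpr hσle
          linarith
        exact inv_anti₀ (by positivity) hc
      have hco := hσ (x:V) n φ ψ hflt
      have h1 : c x * |(φ : WeakDual ℝ V) (x : V) - (ψ : WeakDual ℝ V) (x : V)|
          ≤ 1 * ((n:ℝ)+1)⁻¹ :=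
        mul_le_mul (hcle x) hco (abs_nonneg _) one_pos.le
      have h2 : (0:ℝ) < ((n:ℝ)+1)⁻¹ := by positivity
      linarith
    · have h1 : |(φ : WeakDual ℝ V) (x : V) - (ψ : WeakDual ℝ V) (x : V)|
          ≤ 2 * ‖(x:V)‖ := by
        have hp1 := φ.2 (x:V)
        have hp2 := ψ.2 (x:V)
        calc |(φ : WeakDual ℝ V) (x : V) - (ψ : WeakDual ℝ V) (x : V)|
            ≤ |(φ : WeakDual ℝ V) (x : V)| + |(ψ : WeakDual ℝ V) (x : V)| := abs_sub _ _
        _ ≤ ‖(x:V)‖ + ‖(x:V)‖ := add_le_add hp1 hp2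
        _ = 2 * ‖(x:V)‖ := by ring
      have hkr : ((n:ℝ)+1) ≤ ((k x : ℝ)+1) := by
        have hcast : (n:ℝ) ≤ (k x : ℝ) := Nat.cast_le.mpr hkn.le
        linarith
      have hcx : c x * (2 * ‖(x:V)‖) ≤ 2 * ((n:ℝ)+1)⁻¹ := by
        rw [hcdef]
        have hpos : (0:ℝ) < ((k x : ℝ) + 1) * (1 + ‖(x:V)‖) := by positivity
        rw [inv_mul_le_iff₀ hpos]
        calc 2 * ‖(x:V)‖ ≤ 2 * (1 + ‖(x:V)‖) := by linarith [norm_nonneg (x:V)]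
        _ = ((n:ℝ)+1) * (1 + ‖(x:V)‖) * (2 * ((n:ℝ)+1)⁻¹) := by
            field_simp
        _ ≤ ((k x:ℝ)+1) * (1 + ‖(x:V)‖) * (2 * ((n:ℝ)+1)⁻¹) := by
            have hh : ((n:ℝ)+1) * (1 + ‖(x:V)‖) ≤ ((k x:ℝ)+1) * (1 + ‖(x:V)‖) :=
              mul_le_mul_of_nonneg_right hkr (by positivity)
            exact mul_le_mul_of_nonneg_right hh (by positivity)
        _ = ((k x:ℝ)+1) * (1 + ‖(x:V)‖) * (2 * ((n:ℝ)+1)⁻¹) := rfl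
      calc c x * |(φ : WeakDual ℝ V) (x : V) - (ψ : WeakDual ℝ V) (x : V)|
          ≤ c x * (2 * ‖(x:V)‖) :=
            mul_le_mul_of_nonneg_left h1 (hcpos x).le
      _ ≤ 2 * ((n:ℝ)+1)⁻¹ := hcx
  have hsup : dM M φ ψ ≤ 2 * ((n:ℝ)+1)⁻¹ := by
    refine ciSup_le hbound
  have : 2 * ((n:ℝ)+1)⁻¹ < ε := by
    rw [one_div] at hn
    linarith
  linarith
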